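/- Let μ be a probability measure on the unit circle with infinite support, (Φ_n) its monic orthogonal polynomials, φ_n = Φ_n/‖Φ_n‖_μ, 0 < γ < 1, ζ = e^{iω} on the unit circle, and ν = (1-γ)μ + γδ_ω. Let A be the n×n matrix with entries A_{jk} = ⟨Φ_k, Φ_j⟩_ν and v the column vector with entries v_j = ⟨Φ_n, Φ_j⟩_ν for 0 ≤ j ≤ n-1. Then A is invertible and (A^{-1}v)_j = ((1-γ) + γK_{n-1}(ζ))^{-1} γ conj(Φ_n(ζ)) ‖Φ_j‖_μ^{-1} φ_j(ζ), where K_{n-1}(ζ) = Σ_{j=0}^{n-1} |φ_j(ζ)|². -/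

import Mathlib

open MeasureTheory Polynomial Finset Matrix

noncomputable section

/-- The `L²(μ)` inner product `⟨f,g⟩_μ = ∫ conj (f z) * g z dμ(z)`. -/
def mInner (μ : Measure ℂ) (f g : ℂ → ℂ) : ℂ :=
  ∫ z, (starRingEnd ℂ) (f z) * g z ∂μ

/-- The `L²(μ)` norm `‖f‖_μ = (∫ |f z|² dμ(z))^{1/2}`. -/
def mNorm (μ : Measure ℂ) (f : ℂ → ℂ) : ℝ :=
  Real.sqrt (∫ z, ‖f z‖ ^ 2 ∂μ)

/-- `Φ` is the family of monic orthogonal polynomials for `μ`: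
`Φ n` is monic of degree `n`, and distinct `Φ`'s are orthogonal in `L²(μ)`. -/
def IsMonicOPS (μ : Measure ℂ) (Φ : ℕ → Polynomial ℂ) : Prop :=
  (∀ n, (Φ n).Monic ∧ (Φ n).natDegree = n) ∧
    ∀ m n, m ≠ n →
      mInner μ (fun z => (Φ m).eval z) (fun z => (Φ n).eval z) = 0

/-- `μ` is a measure on the unit circle `∂𝔻 = {z : ℂ | |z| = 1}`. -/
def OnCircle (μ : Measure ℂ) : Prop := μ {z : ℂ | ‖z‖ = 1}ᶜ = 0

/-- The (closed) support of `μ` is an infinite set: every closed set of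
full measure is infinite. -/
def InfiniteSupport (μ : Measure ℂ) : Prop :=
  ∀ t : Set ℂ, IsClosed t → μ tᶜ = 0 → t.Infinite

namespace InverseGramAux

lemma poly_bound (p : Polynomial ℂ) :
    ∃ C : ℝ, 0 ≤ C ∧ ∀ z : ℂ, ‖z‖ = 1 → ‖p.eval z‖ ≤ C := by
  refine ⟨∑ i ∈ Finset.range (p.natDegree + 1), ‖p.coeff i‖,
    Finset.sum_nonneg fun i _ => norm_nonneg _, fun z hz => ?_⟩
  rw [Polynomial.eval_eq_sum_range]
  refine le_trans (norm_sum_le _ _) (le_of_eq (Finset.sum_congr rfl fun i _ => ?_))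
  rw [norm_mul, norm_pow, hz, one_pow, mul_one]

lemma cont_inner (p q : Polynomial ℂ) :
    Continuous fun z : ℂ => (starRingEnd ℂ) (p.eval z) * q.eval z := by
  exact (continuous_star.comp p.continuous).mul q.continuous

lemma integrable_dirac' (f : ℂ → ℂ) (hf : Continuous f) (a : ℂ) :
    Integrable f (Measure.dirac a) := by
  refine ⟨hf.aestronglyMeasurable, HasFiniteIntegral.of_bounded (C := ‖f a‖) ?_⟩
  rw [ae_dirac_eq]
  simp

lemma ae_circle {μ : Measure ℂ} (h : OnCircle μ) :
    ∀ᵐ z ∂μ, ‖z‖ = 1 := by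
  rw [MeasureTheory.ae_iff]
  exact h

lemma integrable_inner {μ : Measure ℂ} [IsProbabilityMeasure μ]
    (hc : OnCircle μ) (p q : Polynomial ℂ) :
    Integrable (fun z => (starRingEnd ℂ) (p.eval z) * q.eval z) μ := by
  obtain ⟨Cp, hCp0, hCp⟩ := poly_bound p
  obtain ⟨Cq, hCq0, hCq⟩ := poly_bound q
  refine ⟨(cont_inner p q).aestronglyMeasurable,
    HasFiniteIntegral.of_bounded (C := Cp * Cq) ?_⟩
  filter_upwards [ae_circle hc] with z hz
  rw [norm_mul, RCLike.norm_conj]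
  exact mul_le_mul (hCp z hz) (hCq z hz) (norm_nonneg _) hCp0

lemma mInner_self (μ : Measure ℂ) (p : Polynomial ℂ) :
    mInner μ (fun z => p.eval z) (fun z => p.eval z)
      = ((∫ z, ‖p.eval z‖ ^ 2 ∂μ : ℝ) : ℂ) := by
  unfold mInner
  calc ∫ z, (starRingEnd ℂ) (p.eval z) * p.eval z ∂μ
      = ∫ z, ((‖p.eval z‖ ^ 2 : ℝ) : ℂ) ∂μ := by
        congr 1; funext z; rw [RCLike.conj_mul]; norm_num
    _ = ((∫ z, ‖p.eval z‖ ^ 2 ∂μ : ℝ) : ℂ) := integral_ofReal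

lemma mInner_nu {μ : Measure ℂ} [IsProbabilityMeasure μ]
    (hc : OnCircle μ)
    {γ : ℝ} (hγ0 : 0 < γ) (hγ1 : γ < 1) (ζ : ℂ) {ν : Measure ℂ}
    (hν : ν = ENNReal.ofReal (1 - γ) • μ + ENNReal.ofReal γ • Measure.dirac ζ)
    (p q : Polynomial ℂ) :
    mInner ν (fun z => p.eval z) (fun z => q.eval z)
      = ((1 - γ : ℝ) : ℂ) * mInner μ (fun z => p.eval z) (fun z => q.eval z)
        + (γ : ℂ) * ((starRingEnd ℂ) (p.eval ζ) * q.eval ζ) := by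
  have h1 : Integrable (fun z => (starRingEnd ℂ) (p.eval z) * q.eval z)
      (ENNReal.ofReal (1 - γ) • μ) :=
    (integrable_inner hc p q).smul_measure ENNReal.ofReal_ne_top
  have h2 : Integrable (fun z => (starRingEnd ℂ) (p.eval z) * q.eval z)
      (ENNReal.ofReal γ • Measure.dirac ζ) :=
    (integrable_dirac' _ (cont_inner p q) ζ).smul_measure ENNReal.ofReal_ne_top
  unfold mInner
  rw [hν, integral_add_measure h1 h2, integral_smul_measure, integral_smul_measure,
    integral_dirac, ENNReal.toReal_ofReal (by linarith), ENNReal.toReal_ofReal hγ0.le,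
    Complex.real_smul, Complex.real_smul]

lemma norm_sq_pos {μ : Measure ℂ} [IsProbabilityMeasure μ]
    (hc : OnCircle μ) (hs : InfiniteSupport μ)
    (p : Polynomial ℂ) (hp : p ≠ 0) :
    0 < ∫ z, ‖p.eval z‖ ^ 2 ∂μ := by
  have hi : Integrable (fun z => ‖p.eval z‖ ^ 2) μ := by
    have h := (integrable_inner hc p p).norm
    refine h.congr (Filter.Eventually.of_forall fun z => ?_)
    simp only [norm_mul, RCLike.norm_conj]; ring
  rcases lt_or_eq_of_le (integral_nonneg (f := fun z => ‖p.eval z‖ ^ 2) (fun z => sq_nonneg _)) with h | h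
  · exact h
  · exfalso
    have h0 := (integral_eq_zero_iff_of_nonneg (fun z => sq_nonneg _) hi).mp h.symm
    have hroot : μ {z : ℂ | p.eval z = 0}ᶜ = 0 := by
      have hae : ∀ᵐ z ∂μ, p.eval z = 0 := by
        filter_upwards [h0] with z hz
        have : ‖p.eval z‖ ^ 2 = 0 := hz
        simpa [pow_eq_zero_iff] using this
      have := MeasureTheory.ae_iff.mp hae
      exact this
    have hinf := hs _ (isClosed_eq p.continuous continuous_const) hroot
    exact hp (p.eq_zero_of_infinite_isRoot hinf)

end InverseGramAux

set_option maxHeartbeats 1000000 in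
open InverseGramAux in
theorem inverse_gram_applied_to_v
    (μ : Measure ℂ) [IsProbabilityMeasure μ] (hcirc : OnCircle μ)
    (hsupp : InfiniteSupport μ)
    (Φ : ℕ → Polynomial ℂ) (hΦ : IsMonicOPS μ Φ)
    (φ : ℕ → ℂ → ℂ)
    (hφ : ∀ m z, φ m z = (Φ m).eval z / (mNorm μ (fun w => (Φ m).eval w) : ℂ))
    (γ : ℝ) (hγ0 : 0 < γ) (hγ1 : γ < 1)
    (ω : ℝ) (ζ : ℂ) (hζ : ζ = Complex.exp (ω * Complex.I))
    (ν : Measure ℂ)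
    (hν : ν = ENNReal.ofReal (1 - γ) • μ + ENNReal.ofReal γ • Measure.dirac ζ)
    (n : ℕ) (A : Matrix (Fin n) (Fin n) ℂ)
    (hA : ∀ j k : Fin n,
      A j k = mInner ν (fun z => (Φ (k : ℕ)).eval z) (fun z => (Φ (j : ℕ)).eval z))
    (v : Fin n → ℂ)
    (hv : ∀ j : Fin n, v j = mInner ν (fun z => (Φ n).eval z) (fun z => (Φ (j : ℕ)).eval z))
    (Kprev : ℝ) (hK : Kprev = ∑ j ∈ Finset.range n, ‖φ j ζ‖ ^ 2) :
    IsUnit A ∧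
      ∀ j : Fin n, (A⁻¹ *ᵥ v) j =
        ((((1 - γ) + γ * Kprev : ℝ) : ℂ))⁻¹ * (γ : ℂ) * (starRingEnd ℂ) ((Φ n).eval ζ) *
          ((mNorm μ (fun w => (Φ (j : ℕ)).eval w) : ℝ) : ℂ)⁻¹ * φ (j : ℕ) ζ := by
  obtain ⟨hmon, horth⟩ := hΦ
  set s : ℝ := (1 - γ) + γ * Kprev with hsdef
  set N : ℕ → ℝ := fun j => ∫ z, ‖(Φ j).eval z‖ ^ 2 ∂μ with hNdef
  set W : ℕ → ℂ := fun j => (Φ j).eval ζ with hWdef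
  set a : ℂ := ((1 - γ : ℝ) : ℂ) with hadef
  have hNpos : ∀ j, 0 < N j := fun j =>
    norm_sq_pos hcirc hsupp _ (hmon j).1.ne_zero
  have hNne : ∀ j, (N j : ℂ) ≠ 0 := fun j => by
    exact_mod_cast (hNpos j).ne'
  have hane : a ≠ 0 := by
    rw [hadef]
    exact_mod_cast (by linarith : (1 : ℝ) - γ ≠ 0)
  have hKnn : 0 ≤ Kprev := by
    rw [hK]; exact Finset.sum_nonneg fun i _ => sq_nonneg _
  have hspos : 0 < s := by rw [hsdef]; nlinarith
  have hsne : ((s : ℝ) : ℂ) ≠ 0 := by exact_mod_cast hspos.ne'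
  -- norm coefficients
  have hmN : ∀ j : ℕ, mNorm μ (fun w => (Φ j).eval w) = Real.sqrt (N j) := fun j => rfl
  have hcoef : ∀ j : ℕ, (((mNorm μ (fun w => (Φ j).eval w) : ℝ)) : ℂ)⁻¹ * φ j ζ
      = ((N j : ℂ))⁻¹ * W j := by
    intro j
    rw [hφ, hmN, show (Φ j).eval ζ = W j from rfl]
    have h1 : ((Real.sqrt (N j) : ℝ) : ℂ) * ((Real.sqrt (N j) : ℝ) : ℂ) = ((N j : ℝ) : ℂ) := by
      rw [← Complex.ofReal_mul, Real.mul_self_sqrt (hNpos j).le]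
    rw [div_eq_mul_inv,
      show (((Real.sqrt (N j) : ℝ) : ℂ))⁻¹ * (W j * (((Real.sqrt (N j) : ℝ) : ℂ))⁻¹)
        = ((((Real.sqrt (N j) : ℝ) : ℂ)) * (((Real.sqrt (N j) : ℝ) : ℂ)))⁻¹ * W j by
          rw [mul_inv]; ring, h1]
  have hKsum : ∑ k : Fin n,
      ((starRingEnd ℂ) (W k) * (((N (k : ℕ) : ℝ) : ℂ))⁻¹ * W k) = ((Kprev : ℝ) : ℂ) := by
    have per : ∀ k : Fin n, (starRingEnd ℂ) (W k) * (((N (k : ℕ) : ℝ) : ℂ))⁻¹ * W k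
        = ((‖φ (k : ℕ) ζ‖ ^ 2 : ℝ) : ℂ) := by
      intro k
      have hφn : ‖φ (k : ℕ) ζ‖ ^ 2 = ‖W (k : ℕ)‖ ^ 2 / N (k : ℕ) := by
        rw [hφ, hmN, show (Φ (k : ℕ)).eval ζ = W (k : ℕ) from rfl, norm_div,
          Complex.norm_real, Real.norm_eq_abs,
          abs_of_nonneg (Real.sqrt_nonneg _), div_pow, Real.sq_sqrt (hNpos (k : ℕ)).le]
      have e : (starRingEnd ℂ) (W k) * (((N (k : ℕ) : ℝ) : ℂ))⁻¹ * W k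
          = (((N (k : ℕ) : ℝ) : ℂ))⁻¹ * ((starRingEnd ℂ) (W k) * W k) := by ring
      rw [e, show (starRingEnd ℂ) (W k) * W k = ((‖W (k : ℕ)‖ ^ 2 : ℝ) : ℂ) by
        rw [mul_comm, Complex.mul_conj, Complex.normSq_eq_norm_sq], hφn]
      push_cast
      rw [div_eq_mul_inv]
      ring
    rw [Finset.sum_congr rfl fun k _ => per k, ← Complex.ofReal_sum]
    rw [Fin.sum_univ_eq_sum_range (fun j => ‖φ j ζ‖ ^ 2) n, ← hK]
  -- entries of A and v
  have hA' : ∀ j k : Fin n, A j k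
      = a * (if j = k then ((N (j : ℕ) : ℝ) : ℂ) else 0)
        + (γ : ℂ) * ((starRingEnd ℂ) (W k) * W j) := by
    intro j k
    rw [hA j k, mInner_nu hcirc hγ0 hγ1 ζ hν]
    congr 1
    by_cases h : j = k
    · subst h
      rw [if_pos rfl, mInner_self]
    · rw [if_neg h, horth (k : ℕ) (j : ℕ) (fun hh => h (Fin.val_injective hh).symm), mul_zero]
  have hv' : ∀ j : Fin n, v j = (γ : ℂ) * ((starRingEnd ℂ) (W n) * W j) := by
    intro j
    rw [hv j, mInner_nu hcirc hγ0 hγ1 ζ hν,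
      horth n (j : ℕ) (Nat.ne_of_gt j.2), mul_zero, zero_add]
  -- candidate solution
  set x : Fin n → ℂ := fun j =>
    ((s : ℝ) : ℂ)⁻¹ * (γ : ℂ) * (starRingEnd ℂ) (W n) * (((N (j : ℕ) : ℝ) : ℂ))⁻¹ * W j
    with hxdef
  have hsC : ((s : ℝ) : ℂ) = a + (γ : ℂ) * ((Kprev : ℝ) : ℂ) := by
    rw [hsdef, hadef]; push_cast; ring
  have hAx : A *ᵥ x = v := by
    funext j
    have hterm : ∀ k : Fin n, A j k * x k
        = (if j = k then a * ((N (j : ℕ) : ℝ) : ℂ) * x k else 0)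
          + (((γ : ℂ) * W j * (((s : ℝ) : ℂ)⁻¹ * (γ : ℂ) * (starRingEnd ℂ) (W n)))
              * ((starRingEnd ℂ) (W k) * (((N (k : ℕ) : ℝ) : ℂ))⁻¹ * W k)) := by
      intro k
      rw [hA' j k]
      simp only [hxdef]
      by_cases h : j = k
      · subst h; rw [if_pos rfl, if_pos rfl]; ring
      · rw [if_neg h, if_neg h]; ring
    rw [show (A *ᵥ x) j = ∑ k, A j k * x k from rfl]
    rw [Finset.sum_congr rfl fun k _ => hterm k, Finset.sum_add_distrib,
      Finset.sum_ite_eq, if_pos (Finset.mem_univ j), ← Finset.mul_sum, hKsum, hv']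
    simp only [hxdef]
    have hNj := hNne (j : ℕ)
    field_simp
    rw [hsC]
    ring
  -- explicit inverse
  set d : ℂ := (γ : ℂ) * (a * ((s : ℝ) : ℂ))⁻¹ with hddef
  set B : Matrix (Fin n) (Fin n) ℂ := fun j k =>
    a⁻¹ * (((N (j : ℕ) : ℝ) : ℂ))⁻¹ * (if j = k then 1 else 0)
      - d * ((((N (j : ℕ) : ℝ) : ℂ))⁻¹ * (((N (k : ℕ) : ℝ) : ℂ))⁻¹
          * (W j * (starRingEnd ℂ) (W k))) with hBdef
  have hABentry : ∀ j l : Fin n, (∑ k, A j k * B k l) = if j = l then 1 else 0 := by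
    intro j l
    have hterm : ∀ k : Fin n, A j k * B k l
        = (if j = k then a * ((N (j : ℕ) : ℝ) : ℂ) * B k l else 0)
          + ((if k = l then
                (γ : ℂ) * (starRingEnd ℂ) (W l) * W j * a⁻¹ * (((N (l : ℕ) : ℝ) : ℂ))⁻¹
              else 0)
            - ((γ : ℂ) * W j * d * (((N (l : ℕ) : ℝ) : ℂ))⁻¹ * (starRingEnd ℂ) (W l))
                * ((starRingEnd ℂ) (W k) * (((N (k : ℕ) : ℝ) : ℂ))⁻¹ * W k)) := by
      intro k
      by_cases h : j = k
      · subst h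
        by_cases h2 : j = l
        · subst h2
          simp [hA', hBdef]
          ring
        · simp [hA', hBdef, h2]
          ring
      · by_cases h2 : k = l
        · subst h2
          simp [hA', hBdef, h]
          ring
        · simp [hA', hBdef, h, h2]
          ring
    rw [Finset.sum_congr rfl fun k _ => hterm k, Finset.sum_add_distrib,
      Finset.sum_ite_eq, if_pos (Finset.mem_univ j), Finset.sum_sub_distrib,
      Finset.sum_ite_eq', if_pos (Finset.mem_univ l), ← Finset.mul_sum, hKsum]
    simp only [hBdef, hddef]
    have hNj := hNne (j : ℕ)
    have hNl := hNne (l : ℕ)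
    have hs2 : a + (γ : ℂ) * ((Kprev : ℝ) : ℂ) ≠ 0 := hsC ▸ hsne
    rw [hsC]
    by_cases h : j = l
    · subst h
      simp only [if_pos rfl, eq_self_iff_true, if_true]
      have hD : a ^ 4 * ((N (j : ℕ) : ℝ) : ℂ) ^ 5 * (γ : ℂ) ^ 2 * ((Kprev : ℝ) : ℂ) ^ 2
          + a ^ 5 * ((N (j : ℕ) : ℝ) : ℂ) ^ 5 * (γ : ℂ) * ((Kprev : ℝ) : ℂ) * 2
          + a ^ 6 * ((N (j : ℕ) : ℝ) : ℂ) ^ 5 ≠ 0 := by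
        have he : a ^ 4 * ((N (j : ℕ) : ℝ) : ℂ) ^ 5 * (γ : ℂ) ^ 2 * ((Kprev : ℝ) : ℂ) ^ 2
            + a ^ 5 * ((N (j : ℕ) : ℝ) : ℂ) ^ 5 * (γ : ℂ) * ((Kprev : ℝ) : ℂ) * 2
            + a ^ 6 * ((N (j : ℕ) : ℝ) : ℂ) ^ 5
            = a ^ 4 * ((N (j : ℕ) : ℝ) : ℂ) ^ 5 * (a + (γ : ℂ) * ((Kprev : ℝ) : ℂ)) ^ 2 := by
          ring
        rw [he]
        exact mul_ne_zero (mul_ne_zero (pow_ne_zero _ hane) (pow_ne_zero _ hNj))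
          (pow_ne_zero _ hs2)
      field_simp [hane, hNj, hs2]
      ring
    · simp only [if_neg h]
      field_simp [hane, hNj, hNl, hs2]
      ring
  have hAB : A * B = 1 := by
    apply Matrix.ext
    intro j l
    rw [Matrix.mul_apply, hABentry j l, Matrix.one_apply]
  have hdet : IsUnit A.det := by
    apply IsUnit.of_mul_eq_one B.det
    rw [← Matrix.det_mul, hAB, Matrix.det_one]
  have hU : IsUnit A := (Matrix.isUnit_iff_isUnit_det A).mpr hdet
  refine ⟨hU, fun j => ?_⟩
  have hinv : A⁻¹ *ᵥ v = x := by
    rw [← hAx, Matrix.mulVec_mulVec, Matrix.nonsing_inv_mul A hdet, Matrix.one_mulVec]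
  rw [hinv, hxdef]
  rw [mul_assoc (((s : ℝ) : ℂ)⁻¹ * (γ : ℂ) * (starRingEnd ℂ) ((Φ n).eval ζ)), hcoef j]
  simp only [hWdef]
  ring
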